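/- Let φ: S¹ → S¹ be a homeomorphism conjugating a uniquely ergodic circle homeomorphism T to the rigid rotation R_ρ (φ∘T∘φ^{-1} = R_ρ), with invariant measure μ. If φ is differentiable at every point of a set Θ of positive Lebesgue measure with derivative equal to a constant α > 0, then μ is not singular with respect to Lebesgue measure. -/

import Mathlib

open MeasureTheory Filter Metric Set
open scoped ENNReal

theorem stmt18
    (T : AddCircle (1 : ℝ) → AddCircle (1 : ℝ)) (hT : Continuous T)
    (μ : Measure (AddCircle (1 : ℝ))) [IsProbabilityMeasure μ]
    (hTinv : Measure.map T μ = μ)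
    (huniq : ∀ ν : Measure (AddCircle (1 : ℝ)), IsProbabilityMeasure ν →
      Measure.map T ν = ν → ν = μ)
    (ρ : ℝ) (hρirr : Irrational ρ)
    (φ : Homeomorph (AddCircle (1 : ℝ)) (AddCircle (1 : ℝ)))
    (hconj : ∀ x, φ (T x) = φ x + (ρ : AddCircle (1 : ℝ)))
    (hφμ : Measure.map φ μ = volume)
    (Θ : Set (AddCircle (1 : ℝ))) (hΘ : 0 < volume Θ)
    (α : ℝ) (hα : 0 < α)
    (hdiff : ∀ η₀ ∈ Θ,
      Tendsto (fun η => dist (φ η) (φ η₀) / dist η η₀) (nhdsWithin η₀ {η₀}ᶜ)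
        (nhds α)) :
    ¬ μ.MutuallySingular volume := by
  intro hsing
  haveI : Fact ((0:ℝ) < 1) := ⟨one_pos⟩
  -- Radon–Nikodym derivative vanishes a.e.
  have hrn : μ.rnDeriv volume =ᵐ[volume] 0 := hsing.rnDeriv_ae_eq_zero
  set v := IsUnifLocDoublingMeasure.vitaliFamily (volume : Measure (AddCircle (1:ℝ))) 1 with hv
  have hD := v.ae_tendsto_rnDeriv μ
  have key : ∀ᵐ x ∂(volume : Measure (AddCircle (1:ℝ))),
      Tendsto (fun r : ℝ => μ (closedBall x r) / volume (closedBall x r))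
        (nhdsWithin 0 (Set.Ioi 0)) (nhds 0) := by
    filter_upwards [hrn, hD] with x hx hDx
    have hball : Tendsto (fun r : ℝ => closedBall x r) (nhdsWithin 0 (Set.Ioi 0))
        (v.filterAt x) := by
      refine IsUnifLocDoublingMeasure.tendsto_closedBall_filterAt (K := 1) volume
        (fun _ => x) id tendsto_id ?_
      filter_upwards [self_mem_nhdsWithin] with r hr
      show x ∈ closedBall x (1 * r)
      rw [one_mul]
      exact mem_closedBall_self (le_of_lt hr)
    have := hDx.comp hball
    simpa [hx, Function.comp_def] using this
  -- pick a point of Θ where the ratio tends to 0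
  have hex : ∃ x ∈ Θ, Tendsto (fun r : ℝ => μ (closedBall x r) / volume (closedBall x r))
      (nhdsWithin 0 (Set.Ioi 0)) (nhds 0) := by
    by_contra hcon
    push_neg at hcon
    have hsub : Θ ⊆ {x | ¬ Tendsto (fun r : ℝ => μ (closedBall x r) / volume (closedBall x r))
        (nhdsWithin 0 (Set.Ioi 0)) (nhds 0)} := fun x hx => hcon x hx
    have : volume Θ = 0 := measure_mono_null hsub key
    exact hΘ.ne' this
  obtain ⟨x, hxΘ, hPx⟩ := hex
  -- derivative lower bound near x
  have h1 : ∀ᶠ y in nhdsWithin x {x}ᶜ, α / 2 < dist (φ y) (φ x) / dist y x :=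
    (hdiff x hxΘ).eventually (eventually_gt_nhds (by linarith))
  rw [Filter.Eventually, Metric.mem_nhdsWithin_iff] at h1
  obtain ⟨ε₁, hε₁pos, hε₁⟩ := h1
  -- continuity of φ.symm at φ x
  have hsymm : Tendsto (φ.symm : AddCircle (1:ℝ) → AddCircle (1:ℝ)) (nhds (φ x)) (nhds x) := by
    have := φ.symm.continuous.tendsto (φ x)
    simpa using this
  obtain ⟨δ, hδpos, hδ⟩ := Metric.tendsto_nhds_nhds.mp hsymm ε₁ hε₁pos
  set rb : ℝ := min (min (1/2) (2/α)) (2*δ/α) with hrb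
  have hrbpos : 0 < rb := by
    have h1 : (0:ℝ) < 2*δ/α := by positivity
    have h2 : (0:ℝ) < 2/α := by positivity
    rw [hrb, lt_min_iff, lt_min_iff]
    exact ⟨⟨by norm_num, h2⟩, h1⟩
  -- image inclusion
  have himg : ∀ r : ℝ, 0 < r → r < rb → closedBall (φ x) (α*r/4) ⊆ φ '' closedBall x r := by
    intro r hr hrlt z hz
    refine ⟨φ.symm z, ?_, φ.apply_symm_apply z⟩
    simp only [mem_closedBall] at hz ⊢
    have hrb3 : r < 2*δ/α := lt_of_lt_of_le hrlt (min_le_right _ _)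
    have hzδ : dist z (φ x) < δ := by
      have h4 : r * α < 2*δ := (lt_div_iff₀ hα).mp hrb3
      calc dist z (φ x) ≤ α*r/4 := hz
        _ < δ := by nlinarith
    have hyε : dist (φ.symm z) x < ε₁ := hδ hzδ
    by_cases hy : φ.symm z = x
    · simp [hy, hr.le]
    · have hmem : φ.symm z ∈ ball x ε₁ ∩ ({x}ᶜ : Set _) := ⟨by simpa using hyε, hy⟩
      have hltr := hε₁ hmem
      rw [Set.mem_setOf_eq, φ.apply_symm_apply] at hltr
      have hd : 0 < dist (φ.symm z) x := dist_pos.mpr hy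
      have h2 : α / 2 * dist (φ.symm z) x < dist z (φ x) := (lt_div_iff₀ hd).mp hltr
      nlinarith
  -- measure identity
  have hmap : ∀ s : Set (AddCircle (1:ℝ)), MeasurableSet s → μ s = volume (φ '' s) := by
    intro s hs
    have him : φ '' s = φ.symm ⁻¹' s := φ.image_eq_preimage_symm s
    rw [him, ← hφμ, Measure.map_apply φ.continuous.measurable
      (φ.symm.continuous.measurable hs)]
    congr 1
    ext y
    simp
  -- derive contradiction
  have hc : (0:ℝ≥0∞) < ENNReal.ofReal (α/4) := ENNReal.ofReal_pos.mpr (by linarith)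
  have hev2 : ∀ᶠ r in nhdsWithin (0:ℝ) (Set.Ioi 0),
      μ (closedBall x r) / volume (closedBall x r) < ENNReal.ofReal (α/4) :=
    hPx.eventually (gt_mem_nhds hc)
  have hev1 : ∀ᶠ r in nhdsWithin (0:ℝ) (Set.Ioi 0), r < rb :=
    eventually_of_mem (Ioo_mem_nhdsGT hrbpos) (fun r hr => hr.2)
  obtain ⟨r, hlt, hrrb, hrpos⟩ := (hev2.and (hev1.and self_mem_nhdsWithin)).exists
  have hrpos' : (0:ℝ) < r := hrpos
  have hr12 : r ≤ 1/2 := le_of_lt (lt_of_lt_of_le hrrb ((min_le_left _ _).trans (min_le_left _ _)))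
  have hr2α : r ≤ 2/α := le_of_lt (lt_of_lt_of_le hrrb ((min_le_left _ _).trans (min_le_right _ _)))
  have hvol : volume (closedBall x r) = ENNReal.ofReal (2*r) := by
    rw [AddCircle.volume_closedBall]
    congr 1
    exact min_eq_right (by linarith)
  have hμlb : ENNReal.ofReal (α*r/2) ≤ μ (closedBall x r) := by
    rw [hmap _ measurableSet_closedBall]
    refine le_trans ?_ (measure_mono (himg r hrpos' hrrb))
    rw [AddCircle.volume_closedBall]
    apply le_of_eq
    congr 1
    have : (2:ℝ) * (α*r/4) = α*r/2 := by ring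
    rw [this]
    refine (min_eq_right ?_).symm
    have h4 : r * α ≤ 2 := (le_div_iff₀ hα).mp hr2α
    nlinarith
  have hratio : ENNReal.ofReal (α/4) ≤ μ (closedBall x r) / volume (closedBall x r) := by
    rw [hvol]
    have h2r : (0:ℝ) < 2*r := by linarith
    have : ENNReal.ofReal (α/4) = ENNReal.ofReal (α*r/2) / ENNReal.ofReal (2*r) := by
      rw [← ENNReal.ofReal_div_of_pos h2r]
      congr 1
      field_simp
      ring
    rw [this]
    exact ENNReal.div_le_div_right hμlb _
  exact absurd (lt_of_le_of_lt hratio hlt) (lt_irrefl _)
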